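/- Let N, m, n be positive integers, let W = (w_{ij}) ∈ ℝ^{N×N} be doubly stochastic with mixing rate λ := ‖W − 1_N1_Nᵀ/N‖ < 1, and let η > 0. Suppose that matrices X_i^k ∈ ℝ^{m×n} and D_i^k ∈ ℝ^{m×n} (i = 1,…,N, k = 0,1,2,…) satisfy ‖D_i^k‖ ≤ 1 for all i and k, X_i^{k+1} = ∑_{j=1}^N w_{ij}(X_j^k − η D_j^k) for all i and k, and X_i^0 = X_j^0 for all i, j. Then for every k ≥ 0, ‖X_{[N]}^k − 1_N ⊗ X̄^k‖ ≤ √N λ η / (1 − λ), where X_{[N]}^k is the vertical stacking of X_1^k,…,X_N^k, X̄^k is their average, and the norm on the left is the spectral norm of the (Nm)×n stacked matrix. -/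

import Mathlib

open Matrix Kronecker

/-- Spectral norm: ℓ²→ℓ² operator norm of a real matrix. -/
noncomputable def specNorm {ι κ : Type*} [Fintype ι] [Fintype κ] [DecidableEq κ]
    (A : Matrix ι κ ℝ) : ℝ :=
  ‖LinearMap.toContinuousLinearMap (Matrix.toEuclideanLin A)‖

/-- The positive semidefinite square root (as defined in Mathlib of December 2024). -/
noncomputable def Matrix.PosSemidef.sqrt {n 𝕜 : Type*} [Fintype n] [DecidableEq n] [RCLike 𝕜]
    [PartialOrder 𝕜]     {A : Matrix n n 𝕜} (hA : A.PosSemidef) : Matrix n n 𝕜 :=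
  hA.1.eigenvectorUnitary.1 * diagonal ((↑) ∘ (√·) ∘ hA.1.eigenvalues) *
    (star hA.1.eigenvectorUnitary : Matrix n n 𝕜)

/-- Nuclear norm: trace of the positive semidefinite square root of `Aᵀ * A`. -/
noncomputable def nucNorm {ι κ : Type*} [Fintype ι] [Fintype κ] [DecidableEq κ]
    (A : Matrix ι κ ℝ) : ℝ :=
  Matrix.trace (Matrix.posSemidef_conjTranspose_mul_self A).sqrt

/-- Frobenius norm. -/
noncomputable def frobNorm {ι κ : Type*} [Fintype ι] [Fintype κ] (A : Matrix ι κ ℝ) : ℝ :=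
  Real.sqrt (∑ i, ∑ j, (A i j) ^ 2)

/-- Trace inner product `⟨A, B⟩ = trace (Aᵀ B)`. -/
noncomputable def tin {ι κ : Type*} [Fintype ι] [Fintype κ] (A B : Matrix ι κ ℝ) : ℝ :=
  Matrix.trace (Aᵀ * B)

/-- Vertical stacking of `N` matrices of size `m × n`. -/
def vstack {N m n : ℕ} (Y : Fin N → Matrix (Fin m) (Fin n) ℝ) :
    Matrix (Fin N × Fin m) (Fin n) ℝ :=
  fun p j => Y p.1 p.2 j

lemma specNorm_nonneg {ι κ : Type*} [Fintype ι] [Fintype κ] [DecidableEq κ]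
    (A : Matrix ι κ ℝ) : 0 ≤ specNorm A := norm_nonneg _

lemma mulVec_sqrt_le {ι κ : Type*} [Fintype ι] [Fintype κ] [DecidableEq κ]
    (A : Matrix ι κ ℝ) (x : κ → ℝ) :
    Real.sqrt (∑ i, (A.mulVec x i)^2) ≤ specNorm A * Real.sqrt (∑ j, (x j)^2) := by
  have h := (LinearMap.toContinuousLinearMap (Matrix.toEuclideanLin A)).le_opNorm
      ((WithLp.equiv 2 (κ → ℝ)).symm x)
  simp only [LinearMap.coe_toContinuousLinearMap', Matrix.toEuclideanLin_apply_piLp_toLp,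
    EuclideanSpace.norm_eq] at h
  simpa [specNorm, Real.norm_eq_abs, sq_abs] using h

lemma mulVec_sq_le {ι κ : Type*} [Fintype ι] [Fintype κ] [DecidableEq κ]
    (A : Matrix ι κ ℝ) (x : κ → ℝ) :
    ∑ i, (A.mulVec x i)^2 ≤ specNorm A ^ 2 * ∑ j, (x j)^2 := by
  have h := mulVec_sqrt_le A x
  have h1 : (0:ℝ) ≤ ∑ i, (A.mulVec x i)^2 := Finset.sum_nonneg fun _ _ => sq_nonneg _
  have h2 : (0:ℝ) ≤ ∑ j, (x j)^2 := Finset.sum_nonneg fun _ _ => sq_nonneg _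
  nlinarith [Real.sq_sqrt h1, Real.sq_sqrt h2, Real.sqrt_nonneg (∑ i, (A.mulVec x i)^2),
    Real.sqrt_nonneg (∑ j, (x j)^2), specNorm_nonneg A]

lemma specNorm_le_of {ι κ : Type*} [Fintype ι] [Fintype κ] [DecidableEq κ]
    (A : Matrix ι κ ℝ) (c : ℝ) (hc : 0 ≤ c)
    (h : ∀ x : κ → ℝ, ∑ i, (A.mulVec x i)^2 ≤ c^2 * ∑ j, (x j)^2) :
    specNorm A ≤ c := by
  apply ContinuousLinearMap.opNorm_le_bound _ hc
  intro x
  simp only [LinearMap.coe_toContinuousLinearMap', Matrix.toEuclideanLin_apply,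
    EuclideanSpace.norm_eq, Real.norm_eq_abs, sq_abs]
  have key : ∑ i, ((WithLp.equiv 2 (ι → ℝ)).symm (A *ᵥ (WithLp.equiv 2 (κ → ℝ)) x) i)^2
      ≤ c^2 * ∑ j, (x j)^2 := h ((WithLp.equiv 2 (κ → ℝ)) x)
  calc Real.sqrt (∑ i, ((WithLp.equiv 2 (ι → ℝ)).symm (A *ᵥ (WithLp.equiv 2 (κ → ℝ)) x) i)^2)
      ≤ Real.sqrt (c^2 * ∑ j, (x j)^2) := Real.sqrt_le_sqrt key
    _ = c * Real.sqrt (∑ j, (x j)^2) := by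
        rw [Real.sqrt_mul (sq_nonneg c), Real.sqrt_sq hc]

lemma specNorm_zero {ι κ : Type*} [Fintype ι] [Fintype κ] [DecidableEq κ] :
    specNorm (0 : Matrix ι κ ℝ) = 0 := by
  simp [specNorm, map_zero]

lemma specNorm_add_le {ι κ : Type*} [Fintype ι] [Fintype κ] [DecidableEq κ]
    (A B : Matrix ι κ ℝ) : specNorm (A + B) ≤ specNorm A + specNorm B := by
  simp only [specNorm, map_add]
  exact norm_add_le _ _

lemma specNorm_smul {ι κ : Type*} [Fintype ι] [Fintype κ] [DecidableEq κ]
    (c : ℝ) (A : Matrix ι κ ℝ) : specNorm (c • A) = |c| * specNorm A := by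
  simp only [specNorm, _root_.map_smul]
  simpa using norm_smul c (LinearMap.toContinuousLinearMap (Matrix.toEuclideanLin A))

lemma specNorm_vstack_le {N m n : ℕ} (Y : Fin N → Matrix (Fin m) (Fin n) ℝ) (c : ℝ)
    (hc : 0 ≤ c) (h : ∀ i, specNorm (Y i) ≤ c) :
    specNorm (vstack Y) ≤ Real.sqrt N * c := by
  apply specNorm_le_of _ _ (by positivity)
  intro x
  have he : ∑ p : Fin N × Fin m, ((vstack Y).mulVec x p)^2
      = ∑ i, ∑ s, ((Y i).mulVec x s)^2 := by
    rw [Fintype.sum_prod_type]; rfl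
  rw [he, mul_pow, Real.sq_sqrt (Nat.cast_nonneg N)]
  have hx : (0:ℝ) ≤ ∑ j, (x j)^2 := Finset.sum_nonneg fun _ _ => sq_nonneg _
  calc ∑ i, ∑ s, ((Y i).mulVec x s)^2 ≤ ∑ _i : Fin N, c^2 * ∑ j, (x j)^2 := by
        apply Finset.sum_le_sum; intro i _
        refine le_trans (mulVec_sq_le _ _) ?_
        exact mul_le_mul_of_nonneg_right (pow_le_pow_left₀ (specNorm_nonneg _) (h i) 2) hx
    _ = (N:ℝ) * c^2 * ∑ j, (x j)^2 := by
        rw [Finset.sum_const, Finset.card_univ, Fintype.card_fin, nsmul_eq_mul]; ring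

lemma specNorm_blockMul_le {N m n : ℕ} (M : Matrix (Fin N) (Fin N) ℝ)
    (Y : Fin N → Matrix (Fin m) (Fin n) ℝ) :
    specNorm (vstack (fun i => ∑ j, M i j • Y j)) ≤ specNorm M * specNorm (vstack Y) := by
  apply specNorm_le_of _ _ (mul_nonneg (specNorm_nonneg _) (specNorm_nonneg _))
  intro x
  have hmv : ∀ (i : Fin N) (s : Fin m),
      (vstack (fun i => ∑ j, M i j • Y j)).mulVec x (i, s)
        = M.mulVec (fun j => (Y j).mulVec x s) i := by
    intro i s
    simp only [vstack, mulVec, dotProduct, Matrix.sum_apply, Matrix.smul_apply, smul_eq_mul,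
      Finset.sum_mul]
    rw [Finset.sum_comm]
    simp [Finset.mul_sum, mul_assoc]
  have he : ∑ p : Fin N × Fin m, ((vstack (fun i => ∑ j, M i j • Y j)).mulVec x p)^2
      = ∑ s : Fin m, ∑ i : Fin N, (M.mulVec (fun j => (Y j).mulVec x s) i)^2 := by
    rw [Fintype.sum_prod_type, Finset.sum_comm]
    simp only [hmv]
  rw [he]
  have hx : (0:ℝ) ≤ ∑ j, (x j)^2 := Finset.sum_nonneg fun _ _ => sq_nonneg _
  calc ∑ s : Fin m, ∑ i : Fin N, (M.mulVec (fun j => (Y j).mulVec x s) i)^2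
      ≤ ∑ s : Fin m, specNorm M ^2 * ∑ j, ((Y j).mulVec x s)^2 :=
        Finset.sum_le_sum fun s _ => mulVec_sq_le _ _
    _ = specNorm M ^2 * ∑ p : Fin N × Fin m, ((vstack Y).mulVec x p)^2 := by
        rw [← Finset.mul_sum, Fintype.sum_prod_type, Finset.sum_comm]; rfl
    _ ≤ specNorm M ^2 * (specNorm (vstack Y)^2 * ∑ j, (x j)^2) := by
        exact mul_le_mul_of_nonneg_left (mulVec_sq_le (vstack Y) x) (sq_nonneg _)
    _ = (specNorm M * specNorm (vstack Y))^2 * ∑ j, (x j)^2 := by ring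

/-- Consensus error of the DeMuon iterate recursion (Lemma: consensus error). -/
theorem stmt0 (N m n : ℕ) (hN : 0 < N) (hm : 0 < m) (hn : 0 < n)
    (W : Matrix (Fin N) (Fin N) ℝ)
    (hrow : ∀ i, ∑ j, W i j = 1) (hcol : ∀ j, ∑ i, W i j = 1)
    (lam : ℝ)
    (hlam : lam = specNorm (W - (N : ℝ)⁻¹ • Matrix.of (fun _ _ => (1 : ℝ))))
    (hlt : lam < 1)
    (η : ℝ) (hη : 0 < η)
    (X D : ℕ → Fin N → Matrix (Fin m) (Fin n) ℝ)
    (hD : ∀ k i, specNorm (D k i) ≤ 1)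
    (hrec : ∀ k i, X (k + 1) i = ∑ j, W i j • (X k j - η • D k j))
    (hinit : ∀ i j, X 0 i = X 0 j) :
    ∀ k, specNorm (vstack (X k) - vstack (fun _ => (N : ℝ)⁻¹ • ∑ i, X k i))
      ≤ Real.sqrt N * lam * η / (1 - lam) := by
  have hNR : ((N:ℝ)) ≠ 0 := Nat.cast_ne_zero.mpr hN.ne'
  set M : Matrix (Fin N) (Fin N) ℝ := W - (N : ℝ)⁻¹ • Matrix.of (fun _ _ => (1 : ℝ)) with hM
  set Xbar : ℕ → Matrix (Fin m) (Fin n) ℝ := fun k => (N : ℝ)⁻¹ • ∑ i, X k i with hXbar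
  have hlam0 : 0 ≤ lam := hlam ▸ specNorm_nonneg _
  have h1 : 0 < 1 - lam := by linarith
  have hMij : ∀ i j, M i j = W i j - (N:ℝ)⁻¹ := by
    intro i j; simp [hM, Matrix.sub_apply, Matrix.smul_apply]
  have hMsum : ∀ i, ∑ j, M i j = 0 := by
    intro i
    simp only [hMij, Finset.sum_sub_distrib, hrow, Finset.sum_const, Finset.card_univ,
      Fintype.card_fin, nsmul_eq_mul]
    field_simp
    norm_num
  have key : ∀ k i, X (k+1) i - Xbar (k+1) = ∑ j, M i j • ((X k j - Xbar k) - η • D k j) := by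
    intro k i
    have hsum : ∑ l, X (k+1) l = ∑ j, (X k j - η • D k j) := by
      calc ∑ l, X (k+1) l = ∑ l, ∑ j, W l j • (X k j - η • D k j) := by
            exact Finset.sum_congr rfl fun l _ => hrec k l
        _ = ∑ j, ∑ l, W l j • (X k j - η • D k j) := Finset.sum_comm
        _ = ∑ j, (∑ l, W l j) • (X k j - η • D k j) := by
            exact Finset.sum_congr rfl fun j _ => (Finset.sum_smul).symm
        _ = ∑ j, (X k j - η • D k j) := by simp [hcol]
    have hXb1 : Xbar (k+1) = (N:ℝ)⁻¹ • ∑ j, (X k j - η • D k j) := by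
      rw [hXbar]; dsimp only; rw [hsum]
    have expand : ∀ j, M i j • ((X k j - Xbar k) - η • D k j)
        = W i j • (X k j - η • D k j) - (N:ℝ)⁻¹ • (X k j - η • D k j) - M i j • Xbar k := by
      intro j
      rw [hMij i j]
      module
    rw [hrec k i, hXb1, Finset.sum_congr rfl (fun j _ => expand j)]
    rw [Finset.sum_sub_distrib, Finset.sum_sub_distrib, ← Finset.sum_smul, hMsum i, zero_smul,
      sub_zero]
    simp only [smul_sub, Finset.sum_sub_distrib, Finset.smul_sum]
  have main : ∀ k, specNorm (vstack (fun i => X k i - Xbar k))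
      ≤ Real.sqrt N * lam * η / (1 - lam) := by
    intro k
    induction k with
    | zero =>
      have h0 : ∀ i, X 0 i - Xbar 0 = 0 := by
        intro i
        have hs : ∑ j, X 0 j = (N:ℝ) • X 0 i := by
          calc ∑ j, X 0 j = ∑ _j : Fin N, X 0 i := Finset.sum_congr rfl fun j _ => hinit j i
            _ = (N:ℝ) • X 0 i := by
              rw [Finset.sum_const, Finset.card_univ, Fintype.card_fin]
              rw [Nat.cast_smul_eq_nsmul ℝ _ _ |>.symm]
        rw [hXbar]; dsimp only; rw [hs, smul_smul, inv_mul_cancel₀ hNR, one_smul, sub_self]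
      have hv : vstack (fun i => X 0 i - Xbar 0) = 0 := by
        ext p j
        have := congrFun (congrFun (h0 p.1) p.2) j
        simpa [vstack, Matrix.sub_apply] using this
      rw [hv, specNorm_zero]
      positivity
    | succ k ih =>
      have hvk : vstack (fun i => X (k+1) i - Xbar (k+1))
          = vstack (fun i => ∑ j, M i j • ((X k j - Xbar k) - η • D k j)) := by
        ext p j; simp only [vstack, key k]
      have hsplit : vstack (fun j => (X k j - Xbar k) - η • D k j)
          = vstack (fun j => X k j - Xbar k) + (-η) • vstack (D k) := by
        ext p j
        simp [vstack, Matrix.add_apply, Matrix.smul_apply, Matrix.sub_apply]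
        ring
      have hDb : specNorm (vstack (D k)) ≤ Real.sqrt N * 1 :=
        specNorm_vstack_le _ 1 zero_le_one (hD k)
      have hEb : specNorm (vstack (fun j => (X k j - Xbar k) - η • D k j))
          ≤ Real.sqrt N * lam * η / (1 - lam) + η * Real.sqrt N := by
        rw [hsplit]
        refine le_trans (specNorm_add_le _ _) ?_
        rw [specNorm_smul]
        have : |(-η)| = η := by rw [abs_neg, abs_of_pos hη]
        rw [this]
        have h2 : η * specNorm (vstack (D k)) ≤ η * Real.sqrt N := by
          have := mul_le_mul_of_nonneg_left hDb (le_of_lt hη)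
          simpa using this
        exact add_le_add ih h2
      have hlamM : lam = specNorm M := hlam
      calc specNorm (vstack (fun i => X (k+1) i - Xbar (k+1)))
          = specNorm (vstack (fun i => ∑ j, M i j • ((X k j - Xbar k) - η • D k j))) := by
            rw [hvk]
        _ ≤ specNorm M * specNorm (vstack (fun j => (X k j - Xbar k) - η • D k j)) :=
            specNorm_blockMul_le _ _
        _ = lam * specNorm (vstack (fun j => (X k j - Xbar k) - η • D k j)) := by rw [hlamM]
        _ ≤ lam * (Real.sqrt N * lam * η / (1 - lam) + η * Real.sqrt N) :=
            mul_le_mul_of_nonneg_left hEb hlam0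
        _ = Real.sqrt N * lam * η / (1 - lam) := by
            field_simp
            ring
  intro k
  have hgoal : vstack (X k) - vstack (fun _ => (N : ℝ)⁻¹ • ∑ i, X k i)
      = vstack (fun i => X k i - Xbar k) := by
    ext p j
    simp [vstack, Matrix.sub_apply, hXbar]
  rw [hgoal]
  exact main k
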